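/- For every C₀ > 0 and every ε with 0 < ε < 1/9, there exist C > 0 and T > 0 such that for all t ≥ T, all real x with |x + 6t| ≤ C₀ t^{1/3}, and all complex z with |z − 1| ≤ (3t)^{−1/3 + ε}, one has | tθ(z) − ( (4/3) k̂³ + s k̂ ) | ≤ C t^{−1/3 + 4ε}, where k̂ = (3t)^{1/3}(z − 1) and s = (x + 6t)(3t)^{−1/3}. -/

import Mathlib

set_option maxHeartbeats 1600000 in
/-- In the transition region `|x + 6t| ≤ C₀ t^{1/3}`, for `|z − 1| ≤ (3t)^{−1/3+ε}`
(with `0 < ε < 1/9`), the phase `tθ(z) = (1/2)(z − z⁻¹)(x + t(z + z⁻¹)² + 2t)`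
is approximated by the Painlevé II model phase `(4/3)k̂³ + s k̂`, where
`k̂ = (3t)^{1/3}(z − 1)` and `s = (x + 6t)(3t)^{−1/3}`, with error `O(t^{−1/3+4ε})`. -/
theorem ttheta_painleve_model_approx (C₀ : ℝ) (hC₀ : 0 < C₀)
    (ε : ℝ) (hε0 : 0 < ε) (hε1 : ε < 1 / 9) :
    ∃ C > (0 : ℝ), ∃ T > (0 : ℝ), ∀ t : ℝ, T ≤ t → ∀ x : ℝ,
      |x + 6 * t| ≤ C₀ * t ^ ((1 : ℝ) / 3) → ∀ z : ℂ,
      ‖z - 1‖ ≤ (3 * t) ^ (-(1 : ℝ) / 3 + ε) →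
      ‖(1 / 2) * (z - z⁻¹) * ((x : ℂ) + (t : ℂ) * (z + z⁻¹) ^ 2 + 2 * t)
          - ((4 / 3) * ((((3 * t) ^ ((1 : ℝ) / 3) : ℝ) : ℂ) * (z - 1)) ^ 3 +
            (((x + 6 * t) * (3 * t) ^ (-(1 : ℝ) / 3) : ℝ) : ℂ) *
              ((((3 * t) ^ ((1 : ℝ) / 3) : ℝ) : ℂ) * (z - 1)))‖ ≤
        C * t ^ (-(1 : ℝ) / 3 + 4 * ε) := by
  refine ⟨19 + C₀, by linarith, 16, by norm_num, ?_⟩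
  intro t ht x hx z hz
  have ht0 : (0:ℝ) < t := by linarith
  have ht1 : (1:ℝ) ≤ t := by linarith
  have h3t1 : (1:ℝ) ≤ 3 * t := by linarith
  have h3t0 : (0:ℝ) < 3 * t := by linarith
  set p : ℝ := -(1:ℝ)/3 + ε with hp
  have hp0 : p ≤ 0 := by rw [hp]; linarith
  have hple : p ≤ -(2:ℝ)/9 := by rw [hp]; linarith
  have hR0 : (0:ℝ) ≤ (3*t) ^ p := Real.rpow_nonneg h3t0.le p
  -- R ≤ 1/2
  have hRhalf : (3*t) ^ p ≤ 1/2 := by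
    have h1 : (3*t) ^ p ≤ (3*t) ^ (-(2:ℝ)/9) := Real.rpow_le_rpow_of_exponent_le h3t1 hple
    have h2 : (48:ℝ) ^ ((2:ℝ)/9) ≤ (3*t) ^ ((2:ℝ)/9) :=
      Real.rpow_le_rpow (by norm_num) (by linarith) (by norm_num)
    have e1 : ((512:ℝ)) ^ ((1:ℝ)/9) = 2 := by
      rw [show (512:ℝ) = 2 ^ (9:ℕ) by norm_num, ← Real.rpow_natCast 2 9,
        ← Real.rpow_mul (by norm_num)]
      norm_num
    have e2 : ((48:ℝ)) ^ ((2:ℝ)/9) = ((2304:ℝ)) ^ ((1:ℝ)/9) := by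
      rw [show (2304:ℝ) = 48 ^ (2:ℕ) by norm_num, ← Real.rpow_natCast 48 2,
        ← Real.rpow_mul (by norm_num)]
      norm_num
    have h3 : (2:ℝ) ≤ (48:ℝ) ^ ((2:ℝ)/9) := by
      rw [e2, ← e1]
      exact Real.rpow_le_rpow (by norm_num) (by norm_num) (by norm_num)
    have h4 : (2:ℝ) ≤ (3*t) ^ ((2:ℝ)/9) := le_trans h3 h2
    have h5 : (3*t) ^ (-(2:ℝ)/9) = ((3*t) ^ ((2:ℝ)/9))⁻¹ := by
      rw [← Real.rpow_neg h3t0.le]; norm_num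
    have h6 : ((3*t) ^ ((2:ℝ)/9))⁻¹ ≤ 1/2 := by
      rw [show (1:ℝ)/2 = 2⁻¹ by norm_num]
      exact inv_anti₀ (by norm_num) h4
    calc (3*t) ^ p ≤ (3*t) ^ (-(2:ℝ)/9) := h1
      _ = ((3*t) ^ ((2:ℝ)/9))⁻¹ := h5
      _ ≤ 1/2 := h6
  have hr0 : (0:ℝ) ≤ ‖z - 1‖ := norm_nonneg _
  have hrhalf : ‖z - 1‖ ≤ 1/2 := le_trans hz hRhalf
  -- z is bounded away from 0
  have hZhalf : (1:ℝ)/2 ≤ ‖z‖ := by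
    have h1 : ‖(1:ℂ)‖ ≤ ‖z‖ + ‖z - 1‖ := by
      calc ‖(1:ℂ)‖ = ‖z - (z - 1)‖ := by norm_num
        _ ≤ ‖z‖ + ‖z - 1‖ := norm_sub_le _ _
    simp only [norm_one] at h1
    linarith
  have hZ0 : (0:ℝ) < ‖z‖ := by linarith
  have hz0 : z ≠ 0 := by
    intro h
    rw [h] at hZ0
    simp at hZ0
  -- rewrite the model phase
  have hcR : (((3*t) ^ ((1:ℝ)/3)) : ℝ) ^ (3:ℕ) = 3*t := by
    rw [← Real.rpow_natCast ((3*t) ^ ((1:ℝ)/3)) 3, ← Real.rpow_mul h3t0.le]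
    norm_num
  have hc : ((((3*t) ^ ((1:ℝ)/3) : ℝ)) : ℂ) ^ (3:ℕ) = 3 * (t:ℂ) := by
    rw [← Complex.ofReal_pow, hcR]
    push_cast; ring
  have hdR : ((x + 6*t) * (3*t) ^ (-(1:ℝ)/3)) * ((3*t) ^ ((1:ℝ)/3)) = x + 6*t := by
    rw [mul_assoc, ← Real.rpow_add h3t0]
    norm_num
  have hd : (((x + 6*t) * (3*t) ^ (-(1:ℝ)/3) : ℝ) : ℂ) * ((((3*t) ^ ((1:ℝ)/3) : ℝ)) : ℂ)
      = (x:ℂ) + 6*t := by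
    rw [← Complex.ofReal_mul, hdR]
    push_cast; ring
  have hmodel : (4 / 3) * ((((3 * t) ^ ((1 : ℝ) / 3) : ℝ) : ℂ) * (z - 1)) ^ 3 +
      (((x + 6 * t) * (3 * t) ^ (-(1 : ℝ) / 3) : ℝ) : ℂ) *
        ((((3 * t) ^ ((1 : ℝ) / 3) : ℝ) : ℂ) * (z - 1))
      = 4 * (t:ℂ) * (z-1)^3 + ((x:ℂ) + 6*t) * (z-1) := by
    linear_combination (4/3 * (z-1)^3) * hc + (z-1) * hd
  rw [hmodel]
  -- the algebraic identity for the difference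
  have hzz : z * z⁻¹ = 1 := mul_inv_cancel₀ hz0
  have key : (1 / 2) * (z - z⁻¹) * ((x : ℂ) + (t : ℂ) * (z + z⁻¹) ^ 2 + 2 * t)
      - (4 * (t:ℂ) * (z-1)^3 + ((x:ℂ) + 6*t) * (z-1))
      = -(4*(t:ℂ)) * (z-1)^4 * z⁻¹ - ((x:ℂ) + 6*t) * (z-1)^2 * z⁻¹ / 2
        + (t:ℂ) * (z-1)^5 * z⁻¹^2 - 2*(t:ℂ) * (z-1)^4 * z⁻¹^2
        - ((t:ℂ)/2) * (z-1)^6 * z⁻¹^3 := by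
    linear_combination (-10*(t:ℂ) + -1*(x:ℂ) + -6*z⁻¹*(t:ℂ) + -3*z⁻¹^2*(t:ℂ) + 17*z*(t:ℂ)
      + (1/2)*z*(x:ℂ) + 12*z*z⁻¹*(t:ℂ) + (15/2)*z*z⁻¹^2*(t:ℂ) + -12*z^2*(t:ℂ)
      + (-21/2)*z^2*z⁻¹*(t:ℂ) + -10*z^2*z⁻¹^2*(t:ℂ) + (7/2)*z^3*(t:ℂ) + 4*z^3*z⁻¹*(t:ℂ)
      + (15/2)*z^3*z⁻¹^2*(t:ℂ) + (-1/2)*z^4*z⁻¹*(t:ℂ) + -3*z^4*z⁻¹^2*(t:ℂ)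
      + (1/2)*z^5*z⁻¹^2*(t:ℂ)) * hzz
  rw [key]
  -- bound by absolute values of the five terms
  have tri : ‖-(4*(t:ℂ)) * (z-1)^4 * z⁻¹ - ((x:ℂ) + 6*t) * (z-1)^2 * z⁻¹ / 2
        + (t:ℂ) * (z-1)^5 * z⁻¹^2 - 2*(t:ℂ) * (z-1)^4 * z⁻¹^2
        - ((t:ℂ)/2) * (z-1)^6 * z⁻¹^3‖
      ≤ ‖-(4*(t:ℂ)) * (z-1)^4 * z⁻¹‖
        + ‖((x:ℂ) + 6*t) * (z-1)^2 * z⁻¹ / 2‖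
        + ‖(t:ℂ) * (z-1)^5 * z⁻¹^2‖
        + ‖2*(t:ℂ) * (z-1)^4 * z⁻¹^2‖
        + ‖((t:ℂ)/2) * (z-1)^6 * z⁻¹^3‖ := by
    calc ‖_‖ ≤ ‖-(4*(t:ℂ)) * (z-1)^4 * z⁻¹
          - ((x:ℂ) + 6*t) * (z-1)^2 * z⁻¹ / 2
          + (t:ℂ) * (z-1)^5 * z⁻¹^2 - 2*(t:ℂ) * (z-1)^4 * z⁻¹^2‖
        + ‖((t:ℂ)/2) * (z-1)^6 * z⁻¹^3‖ := norm_sub_le _ _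
      _ ≤ (‖-(4*(t:ℂ)) * (z-1)^4 * z⁻¹ - ((x:ℂ) + 6*t) * (z-1)^2 * z⁻¹ / 2
          + (t:ℂ) * (z-1)^5 * z⁻¹^2‖ + ‖2*(t:ℂ) * (z-1)^4 * z⁻¹^2‖)
        + ‖((t:ℂ)/2) * (z-1)^6 * z⁻¹^3‖ := by
          gcongr
          exact norm_sub_le _ _
      _ ≤ ((‖-(4*(t:ℂ)) * (z-1)^4 * z⁻¹ - ((x:ℂ) + 6*t) * (z-1)^2 * z⁻¹ / 2‖
          + ‖(t:ℂ) * (z-1)^5 * z⁻¹^2‖) + ‖2*(t:ℂ) * (z-1)^4 * z⁻¹^2‖)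
        + ‖((t:ℂ)/2) * (z-1)^6 * z⁻¹^3‖ := by
          gcongr
          exact norm_add_le _ _
      _ ≤ (((‖-(4*(t:ℂ)) * (z-1)^4 * z⁻¹‖
          + ‖((x:ℂ) + 6*t) * (z-1)^2 * z⁻¹ / 2‖)
          + ‖(t:ℂ) * (z-1)^5 * z⁻¹^2‖) + ‖2*(t:ℂ) * (z-1)^4 * z⁻¹^2‖)
        + ‖((t:ℂ)/2) * (z-1)^6 * z⁻¹^3‖ := by
          gcongr
          exact norm_sub_le _ _
      _ = _ := by ring
  refine le_trans tri ?_
  -- compute the absolute values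
  have habs_t : ‖(t:ℂ)‖ = t := by
    rw [Complex.norm_real, Real.norm_eq_abs, abs_of_pos ht0]
  have habs_x6t : ‖(x:ℂ) + 6*t‖ = |x + 6*t| := by
    rw [show (x:ℂ) + 6*t = ((x + 6*t : ℝ) : ℂ) by push_cast; ring, Complex.norm_real, Real.norm_eq_abs]
  have e1 : ‖-(4*(t:ℂ)) * (z-1)^4 * z⁻¹‖
      = 4*t*(‖z-1‖)^4*(‖z‖)⁻¹ := by
    simp only [norm_mul, norm_inv, norm_pow, norm_neg, norm_div, map_mul, map_inv₀, map_pow, map_neg_eq_map, habs_t, Complex.norm_ofNat]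
  have e2 : ‖((x:ℂ) + 6*t) * (z-1)^2 * z⁻¹ / 2‖
      = |x + 6*t| * (‖z-1‖)^2 * (‖z‖)⁻¹ / 2 := by
    simp only [norm_mul, norm_inv, norm_pow, norm_neg, norm_div, map_div₀, map_mul, map_inv₀, map_pow, habs_x6t, Complex.norm_ofNat, Complex.norm_two]
  have e3 : ‖(t:ℂ) * (z-1)^5 * z⁻¹^2‖
      = t*(‖z-1‖)^5*((‖z‖)⁻¹)^2 := by
    simp only [norm_mul, norm_inv, norm_pow, norm_neg, norm_div, map_mul, map_inv₀, map_pow, habs_t]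
  have e4 : ‖2*(t:ℂ) * (z-1)^4 * z⁻¹^2‖
      = 2*t*(‖z-1‖)^4*((‖z‖)⁻¹)^2 := by
    simp only [norm_mul, norm_inv, norm_pow, norm_neg, norm_div, map_mul, map_inv₀, map_pow, habs_t, Complex.norm_ofNat, Complex.norm_two]
  have e5 : ‖((t:ℂ)/2) * (z-1)^6 * z⁻¹^3‖
      = (t/2)*(‖z-1‖)^6*((‖z‖)⁻¹)^3 := by
    simp only [norm_mul, norm_inv, norm_pow, norm_neg, norm_div, map_mul, map_div₀, map_inv₀, map_pow, habs_t, Complex.norm_ofNat, Complex.norm_two]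
  rw [e1, e2, e3, e4, e5]
  -- abbreviations for the real quantities
  set r : ℝ := ‖z - 1‖ with hrdef
  set Z : ℝ := ‖z‖ with hZdef
  have hinv : Z⁻¹ ≤ 2 := by
    rw [show (2:ℝ) = (1/2)⁻¹ by norm_num]
    exact inv_anti₀ (by norm_num) hZhalf
  have hinv0 : (0:ℝ) ≤ Z⁻¹ := inv_nonneg.mpr hZ0.le
  have ha1 : (0:ℝ) ≤ 4*t*r^4 := by positivity
  have ha2 : (0:ℝ) ≤ |x + 6*t| * r^2 :=
    mul_nonneg (abs_nonneg _) (pow_nonneg hr0 2)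
  have hz2 : (Z⁻¹)^2 ≤ 4 := by
    calc (Z⁻¹)^2 ≤ 2^2 := pow_le_pow_left₀ hinv0 hinv 2
      _ = 4 := by norm_num
  have hz3 : (Z⁻¹)^3 ≤ 8 := by
    calc (Z⁻¹)^3 ≤ 2^3 := pow_le_pow_left₀ hinv0 hinv 3
      _ = 8 := by norm_num
  have h5 : r^5 ≤ (1/2)*r^4 := by
    calc r^5 = r^4 * r := by ring
      _ ≤ r^4 * (1/2) := mul_le_mul_of_nonneg_left hrhalf (pow_nonneg hr0 4)
      _ = (1/2)*r^4 := by ring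
  have h6 : r^6 ≤ (1/4)*r^4 := by
    have hq : r^2 ≤ 1/4 := by
      calc r^2 ≤ (1/2)^2 := pow_le_pow_left₀ hr0 hrhalf 2
        _ = 1/4 := by norm_num
    calc r^6 = r^4 * r^2 := by ring
      _ ≤ r^4 * (1/4) := mul_le_mul_of_nonneg_left hq (pow_nonneg hr0 4)
      _ = (1/4)*r^4 := by ring
  have b1 : 4*t*r^4*Z⁻¹ ≤ 8*(t*r^4) := by
    calc 4*t*r^4*Z⁻¹ ≤ 4*t*r^4*2 := mul_le_mul_of_nonneg_left hinv ha1
      _ = 8*(t*r^4) := by ring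
  have b2 : |x + 6*t| * r^2 * Z⁻¹ / 2 ≤ |x + 6*t| * r^2 := by
    have : |x + 6*t| * r^2 * Z⁻¹ ≤ |x + 6*t| * r^2 * 2 := mul_le_mul_of_nonneg_left hinv ha2
    linarith
  have b3 : t*r^5*(Z⁻¹)^2 ≤ 2*(t*r^4) := by
    calc t*r^5*(Z⁻¹)^2 ≤ t*((1/2)*r^4)*(Z⁻¹)^2 :=
          mul_le_mul_of_nonneg_right (mul_le_mul_of_nonneg_left h5 ht0.le) (pow_nonneg hinv0 2)
      _ ≤ t*((1/2)*r^4)*4 :=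
          mul_le_mul_of_nonneg_left hz2 (by positivity)
      _ = 2*(t*r^4) := by ring
  have b4 : 2*t*r^4*(Z⁻¹)^2 ≤ 8*(t*r^4) := by
    calc 2*t*r^4*(Z⁻¹)^2 ≤ 2*t*r^4*4 := mul_le_mul_of_nonneg_left hz2 (by positivity)
      _ = 8*(t*r^4) := by ring
  have b5 : (t/2)*r^6*(Z⁻¹)^3 ≤ t*r^4 := by
    calc (t/2)*r^6*(Z⁻¹)^3 ≤ (t/2)*((1/4)*r^4)*(Z⁻¹)^3 :=
          mul_le_mul_of_nonneg_right (mul_le_mul_of_nonneg_left h6 (by linarith)) (pow_nonneg hinv0 3)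
      _ ≤ (t/2)*((1/4)*r^4)*8 := mul_le_mul_of_nonneg_left hz3 (by positivity)
      _ = t*r^4 := by ring
  have step1 : 4*t*r^4*Z⁻¹ + |x + 6*t| * r^2 * Z⁻¹ / 2 + t*r^5*(Z⁻¹)^2 + 2*t*r^4*(Z⁻¹)^2
      + (t/2)*r^6*(Z⁻¹)^3 ≤ 19*(t*r^4) + |x + 6*t| * r^2 := by linarith
  refine le_trans step1 ?_
  -- now pass from r to R = (3t)^p
  have hr4 : r^4 ≤ ((3*t) ^ p)^4 := pow_le_pow_left₀ hr0 hz 4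
  have hr2 : r^2 ≤ ((3*t) ^ p)^2 := pow_le_pow_left₀ hr0 hz 2
  have hR4 : ((3*t) ^ p)^(4:ℕ) = (3*t) ^ ((4:ℝ)*p) := by
    rw [← Real.rpow_natCast ((3*t)^p) 4, ← Real.rpow_mul h3t0.le]
    norm_num [mul_comm]
  have hR2 : ((3*t) ^ p)^(2:ℕ) = (3*t) ^ ((2:ℝ)*p) := by
    rw [← Real.rpow_natCast ((3*t)^p) 2, ← Real.rpow_mul h3t0.le]
    norm_num [mul_comm]
  have hsplit : ∀ q : ℝ, q ≤ 0 → (3*t) ^ q ≤ t ^ q := by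
    intro q hq
    rw [Real.mul_rpow (by norm_num) ht0.le]
    have h3q : (3:ℝ) ^ q ≤ 1 := Real.rpow_le_one_of_one_le_of_nonpos (by norm_num) hq
    calc (3:ℝ) ^ q * t ^ q ≤ 1 * t ^ q :=
          mul_le_mul_of_nonneg_right h3q (Real.rpow_nonneg ht0.le q)
      _ = t ^ q := one_mul _
  have hbound1 : t * ((3*t) ^ p)^4 ≤ t ^ (-(1:ℝ)/3 + 4*ε) := by
    have h1 : ((3*t) ^ p)^4 ≤ t ^ ((4:ℝ)*p) := by
      rw [hR4]; exact hsplit ((4:ℝ)*p) (by linarith)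
    have h2 : t * ((3*t) ^ p)^4 ≤ t * t ^ ((4:ℝ)*p) := mul_le_mul_of_nonneg_left h1 ht0.le
    have h3 : t * t ^ ((4:ℝ)*p) = t ^ ((1:ℝ) + 4*p) := by
      rw [Real.rpow_add ht0, Real.rpow_one]
    have h4 : (1:ℝ) + 4*p = -(1:ℝ)/3 + 4*ε := by rw [hp]; ring
    rw [h3, h4] at h2
    exact h2
  have hbound2 : t ^ ((1:ℝ)/3) * ((3*t) ^ p)^2 ≤ t ^ (-(1:ℝ)/3 + 4*ε) := by
    have h1 : ((3*t) ^ p)^2 ≤ t ^ ((2:ℝ)*p) := by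
      rw [hR2]; exact hsplit ((2:ℝ)*p) (by linarith)
    have h2 : t ^ ((1:ℝ)/3) * ((3*t) ^ p)^2 ≤ t ^ ((1:ℝ)/3) * t ^ ((2:ℝ)*p) :=
      mul_le_mul_of_nonneg_left h1 (Real.rpow_nonneg ht0.le _)
    have h3 : t ^ ((1:ℝ)/3) * t ^ ((2:ℝ)*p) = t ^ ((1:ℝ)/3 + 2*p) := by
      rw [← Real.rpow_add ht0]
    have h4 : t ^ ((1:ℝ)/3 + 2*p) ≤ t ^ (-(1:ℝ)/3 + 4*ε) := by
      apply Real.rpow_le_rpow_of_exponent_le ht1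
      rw [hp]; linarith
    rw [h3] at h2
    exact le_trans h2 h4
  have hxr : |x + 6*t| * r^2 ≤ C₀ * (t ^ ((1:ℝ)/3) * ((3*t) ^ p)^2) := by
    have h1 : |x + 6*t| * r^2 ≤ (C₀ * t ^ ((1:ℝ)/3)) * ((3*t) ^ p)^2 :=
      mul_le_mul hx hr2 (pow_nonneg hr0 2)
        (mul_nonneg hC₀.le (Real.rpow_nonneg ht0.le _))
    calc |x + 6*t| * r^2 ≤ (C₀ * t ^ ((1:ℝ)/3)) * ((3*t) ^ p)^2 := h1
      _ = C₀ * (t ^ ((1:ℝ)/3) * ((3*t) ^ p)^2) := by ring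
  have htr : 19*(t*r^4) ≤ 19*(t*((3*t) ^ p)^4) := by
    have : t*r^4 ≤ t*((3*t) ^ p)^4 := mul_le_mul_of_nonneg_left hr4 ht0.le
    linarith
  calc 19*(t*r^4) + |x + 6*t| * r^2
      ≤ 19*(t*((3*t) ^ p)^4) + C₀ * (t ^ ((1:ℝ)/3) * ((3*t) ^ p)^2) := by linarith
    _ ≤ 19 * t ^ (-(1:ℝ)/3 + 4*ε) + C₀ * t ^ (-(1:ℝ)/3 + 4*ε) := by
        have h1 := mul_le_mul_of_nonneg_left hbound2 hC₀.le
        linarith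
    _ = (19 + C₀) * t ^ (-(1:ℝ)/3 + 4*ε) := by ring
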